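/- arXiv:1807.02325 — 2 statements merged into one kernel-verified Lean document; each statement's English description precedes it below -/
import Mathlib

section
/- Assume d ≥ 5. There exists a constant C₁ > 0 such that for any r ≥ 1 and any Λ ⊆ Q(r) := [−r/2, r/2)^d ∩ Z^d, one has Σ_{x∈Λ} (‖x‖^{d−4} + 1)^{−1} · P_x(H_Λ^+ = ∞) ≤ C₁ r². -/
open Filter Finset MeasureTheory
open scoped symmDiff ENNReal

namespace SRW

/-- Vertices of `ℤ^d`. -/
abbrev V (d : ℕ) : Type := Fin d → ℤ

/-- The set of nearest-neighbor steps (the `2d` unit vectors `±e_i`) in `ℤ^d`. -/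
def steps (d : ℕ) : Finset (V d) :=
  (Finset.univ : Finset (Fin d × Bool)).image
    (fun p j => if j = p.1 then (if p.2 then 1 else -1) else 0)

/-- Position at time `k` of the walk started at `x` with step sequence `s`. -/
def pos {d : ℕ} (x : V d) (s : ℕ → V d) (k : ℕ) : V d :=
  x + ∑ i ∈ Finset.range k, s i

open Classical in
/-- Probability, for the simple random walk, of an event depending on the
first `n` steps (steps beyond `n` are set to `0`): each of the `(2d)^n`
admissible step sequences has equal probability. -/
noncomputable def probN (d n : ℕ) (P : (ℕ → V d) → Prop) : ℝ :=
  (((Fintype.piFinset fun _ : Fin n => steps d).filter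
      (fun s => P fun i => if h : i < n then s ⟨i, h⟩ else 0)).card : ℝ) / ((2 * d : ℕ) : ℝ) ^ n

/-- Expectation of a functional of the first `n` steps of the walk. -/
noncomputable def expN (d n : ℕ) (f : (ℕ → V d) → ℝ) : ℝ :=
  (∑ s ∈ Fintype.piFinset fun _ : Fin n => steps d,
      f fun i => if h : i < n then s ⟨i, h⟩ else 0) / ((2 * d : ℕ) : ℝ) ^ n

/-- Escape probability `P_x(H_A^+ = ∞)`: the walk started at `x` never
hits `A` at a positive time (decreasing limit of the finite-horizon events). -/
noncomputable def esc (d : ℕ) (A : Set (V d)) (x : V d) : ℝ :=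
  ⨅ n : ℕ, probN d n (fun s => ∀ k, 1 ≤ k → k ≤ n → pos x s k ∉ A)

/-- Newtonian capacity `Cap(A) = Σ_{x∈A} P_x(H_A^+ = ∞)`. -/
noncomputable def cap {d : ℕ} (A : Finset (V d)) : ℝ :=
  ∑ x ∈ A, esc d (↑A) x

/-- Green's function `G(z) = Σ_n P_0(S_n = z)`. -/
noncomputable def G (d : ℕ) (z : V d) : ℝ :=
  ∑' n : ℕ, probN d n (fun s => pos 0 s n = z)

/-- Truncated Green's function `G_T(z) = Σ_{n≤T} P_0(S_n = z)`. -/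
noncomputable def GT (d T : ℕ) (z : V d) : ℝ :=
  ∑ n ∈ Finset.range (T + 1), probN d n (fun s => pos 0 s n = z)

/-- Convolution `(G ⋆ G_T)(x) = Σ_y G(x-y) G_T(y)`. -/
noncomputable def GconvGT (d T : ℕ) (x : V d) : ℝ :=
  ∑' y : V d, G d (x - y) * GT d T y

/-- Euclidean norm on `ℤ^d`. -/
noncomputable def nrm {d : ℕ} (x : V d) : ℝ :=
  Real.sqrt (∑ i, ((x i : ℝ)) ^ 2)

/-- The range `{S_k : k ∈ I}` of the walk started at `x` over the set of times `I`. -/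
noncomputable def rangeOn {d : ℕ} (x : V d) (s : ℕ → V d) (I : Finset ℕ) : Finset (V d) :=
  I.image (pos x s)

/-- Probability that the walk started at `z` hits both `A` and `B` in finite time
(increasing limit of the finite-horizon probabilities). -/
noncomputable def hitBothProb (d : ℕ) (A B : Finset (V d)) (z : V d) : ℝ :=
  ⨆ n : ℕ, probN d n (fun s => (∃ k ≤ n, pos z s k ∈ A) ∧ (∃ k ≤ n, pos z s k ∈ B))

/-- The discrete cube `Q(x,r) = [x - r/2, x + r/2)^d ∩ ℤ^d`. -/
def cube {d : ℕ} (x : V d) (r : ℝ) : Set (V d) :=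
  {y | ∀ i, (x i : ℝ) - r / 2 ≤ (y i : ℝ) ∧ (y i : ℝ) < (x i : ℝ) + r / 2}

/-- The corrector `ξ_n(T)`. -/
noncomputable def xi (d n T : ℕ) (s : ℕ → V d) : ℝ :=
  ∑ k ∈ Finset.range (n + 1), ∑ x ∈ rangeOn 0 s (Finset.Icc 0 k),
    esc d (↑(rangeOn 0 s (Finset.Icc 0 k))) x * (GconvGT d T (x - pos 0 s k) / T)

/-- The capacity cross-term `χ_C(A,B) = Cap(A) + Cap(B) - Cap(A ∪ B)`. -/
noncomputable def chiC {d : ℕ} (A B : Finset (V d)) : ℝ := cap A + cap B - cap (A ∪ B)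

open Classical in
/-- Conditional expectation, given the first `m` steps (equal to those of `s`),
of a functional of the first `n` steps. -/
noncomputable def condExpN (d n m : ℕ) (f : (ℕ → V d) → ℝ) (s : ℕ → V d) : ℝ :=
  expN d n (fun s' => if ∀ i < m, s' i = s i then f s' else 0) * ((2 * d : ℕ) : ℝ) ^ m

/-- The compensator `ξ_n^*(T)`. -/
noncomputable def xiStar (d n T : ℕ) (s : ℕ → V d) : ℝ :=
  (1 / (T : ℝ)) * ∑ j ∈ Finset.range T, ∑ l ∈ Finset.Icc 1 (n / T - 1),
    condExpN d (n + T) (j + l * T)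
      (fun s' => chiC (rangeOn 0 s' (Finset.Icc j (j + l * T)))
        (rangeOn 0 s' (Finset.Icc (j + l * T) (j + (l + 1) * T)))) s

/-- `E[Cap(R_n)]`, the expected capacity of the range up to time `n`. -/
noncomputable def expCapRange (d n : ℕ) : ℝ :=
  expN d n (fun s => cap (rangeOn 0 s (Finset.Icc 0 n)))

/-- The maximal capacity `c_n` of the range of a nearest-neighbor path with `n` steps. -/
noncomputable def maxPathCap (d n : ℕ) : ℝ :=
  sSup {y : ℝ | ∃ (x : V d) (s : ℕ → V d), (∀ i, s i ∈ steps d) ∧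
    y = cap (rangeOn x s (Finset.Icc 0 n))}

/-- `Γ(A,Λ) = Σ_{x∈A} Σ_{y∈Λ} G(y-x) P_y(H_Λ^+ = ∞)`. -/
noncomputable def GamFin (d : ℕ) (A : Finset (V d)) (Λ : Set (V d)) : ℝ :=
  ∑ x ∈ A, ∑' y : Λ, G d ((y : V d) - x) * esc d Λ (y : V d)

/-- `P(Γ(R̃_∞, Λ) > t)`, as the increasing limit of the finite-horizon probabilities. -/
noncomputable def PGam (d : ℕ) (Λ : Set (V d)) (t : ℝ) : ℝ :=
  ⨆ N : ℕ, probN d N (fun s => t < GamFin d (rangeOn 0 s (Finset.Icc 0 N)) Λ)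

/-- `E_x[Γ(R̃_∞, Λ)]`, as the increasing limit of the finite-horizon expectations. -/
noncomputable def EGam (d : ℕ) (x : V d) (Λ : Set (V d)) : ℝ :=
  ⨆ N : ℕ, expN d N (fun s => GamFin d (rangeOn x s (Finset.Icc 0 N)) Λ)

/-- The law of the first `n` steps of two independent simple random walks:
uniform measure on pairs of admissible step sequences of length `n`. -/
noncomputable def pairLevel (d n : ℕ) : Measure ((Fin n → V d) × (Fin n → V d)) :=
  (((2 * d : ℕ) : ℝ≥0∞) ^ (2 * n))⁻¹ •
    ∑ a ∈ Fintype.piFinset fun _ : Fin n => steps d,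
      ∑ b ∈ Fintype.piFinset fun _ : Fin n => steps d, Measure.dirac (a, b)

open Classical in
/-- `Γ(R̃_∞, R_∞) = Σ_{x ∈ R̃_∞} Σ_{y ∈ R_∞} G(y-x) P_y(H_{R_∞}^+ = ∞)` for
two (step sequences of) walks, with values in `ℝ≥0∞`. -/
noncomputable def gammaInf (d : ℕ) (sA sB : ℕ → V d) : ℝ≥0∞ :=
  ∑' x : V d, ∑' y : V d,
    if x ∈ Set.range (pos (0 : V d) sA) ∧ y ∈ Set.range (pos (0 : V d) sB) then
      ENNReal.ofReal (G d (y - x) * esc d (Set.range (pos (0 : V d) sB)) y)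
    else 0

-- ================= aux ===================
section Aux
variable {d : ℕ}

def extSeq (d n : ℕ) (s : Fin n → V d) : ℕ → V d := fun i => if h : i < n then s ⟨i, h⟩ else 0

open Classical in
lemma probN_eq (n : ℕ) (P : (ℕ → V d) → Prop) :
    probN d n P = (((Fintype.piFinset fun _ : Fin n => steps d).filter
      (fun s => P (extSeq d n s))).card : ℝ) / ((2 * d : ℕ) : ℝ) ^ n := rfl

lemma steps_inj : Function.Injective
    (fun p : Fin d × Bool => (fun j => if j = p.1 then (if p.2 then 1 else -1) else 0 : V d)) := by
  rintro ⟨i, b⟩ ⟨i', b'⟩ h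
  have h1 : (if i = i then (if b then (1:ℤ) else -1) else 0)
      = (if i = i' then (if b' then (1:ℤ) else -1) else 0) := congrFun h i
  rw [if_pos rfl] at h1
  have hii : i = i' := by
    by_contra hne
    rw [if_neg hne] at h1
    cases b <;> simp at h1
  subst hii
  rw [if_pos rfl] at h1
  have hb : b = b' := by cases b <;> cases b' <;> simp_all
  rw [hb]

lemma card_steps : (steps d).card = 2 * d := by
  rw [steps, Finset.card_image_of_injective _ steps_inj]
  simp [Fintype.card_prod, mul_comm]

lemma card_piFinset_steps (n : ℕ) :
    (Fintype.piFinset fun _ : Fin n => steps d).card = (2 * d) ^ n := by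
  simp [Fintype.card_piFinset, card_steps]

lemma filter_inst {α : Type*} {p : α → Prop} (h : DecidablePred p) [h' : DecidablePred p]
    (s : Finset α) : @Finset.filter α p h s = @Finset.filter α p h' s := by
  congr 1

lemma probN_nonneg (n : ℕ) (P : (ℕ → V d) → Prop) : 0 ≤ probN d n P := by
  rw [probN_eq]; positivity

lemma denom_pos (hd : 0 < d) (n : ℕ) : (0:ℝ) < ((2 * d : ℕ) : ℝ) ^ n := by
  positivity

lemma probN_le_one (hd : 0 < d) (n : ℕ) (P : (ℕ → V d) → Prop) : probN d n P ≤ 1 := by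
  classical
  rw [probN_eq, div_le_one (denom_pos hd n)]
  have h := Finset.card_le_card (Finset.filter_subset
    (fun s => P (extSeq d n s)) (Fintype.piFinset fun _ : Fin n => steps d))
  rw [card_piFinset_steps] at h
  exact_mod_cast h

lemma probN_mono (hd : 0 < d) (n : ℕ) {P Q : (ℕ → V d) → Prop} (h : ∀ s, P s → Q s) :
    probN d n P ≤ probN d n Q := by
  classical
  rw [probN_eq, probN_eq, div_le_div_iff_of_pos_right (denom_pos hd n)]
  refine Nat.cast_le.2 (Finset.card_le_card ?_)
  intro s hs
  rw [Finset.mem_filter] at hs ⊢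
  exact ⟨hs.1, h _ hs.2⟩

lemma probN_congr (n : ℕ) {P Q : (ℕ → V d) → Prop} (h : ∀ s, P s ↔ Q s) :
    probN d n P = probN d n Q := by
  classical
  rw [probN_eq, probN_eq]
  have heq : (Finset.filter (fun s => P (extSeq d n s)) (Fintype.piFinset fun _ : Fin n => steps d))
      = Finset.filter (fun s => Q (extSeq d n s)) (Fintype.piFinset fun _ : Fin n => steps d) :=
    Finset.filter_congr (fun s _ => h _)
  rw [heq]

lemma esc_nonneg (A : Set (V d)) (x : V d) : 0 ≤ esc d A x :=
  Real.iInf_nonneg fun n => probN_nonneg n _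

lemma esc_le (A : Set (V d)) (x : V d) (n : ℕ) :
    esc d A x ≤ probN d n (fun s => ∀ k, 1 ≤ k → k ≤ n → pos x s k ∉ A) :=
  ciInf_le ⟨0, fun _ ⟨n, hn⟩ => hn ▸ probN_nonneg _ _⟩ n

lemma sum_probN_le_one {ι : Type*} (hd : 0 < d) (n : ℕ) (I : Finset ι)
    (P : ι → (ℕ → V d) → Prop)
    (hdisj : ∀ a ∈ I, ∀ b ∈ I, a ≠ b → ∀ s, P a s → P b s → False) :
    ∑ a ∈ I, probN d n (P a) ≤ 1 := by
  classical
  have hrw : ∀ a, probN d n (P a) = (((Fintype.piFinset fun _ : Fin n => steps d).filter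
      (fun s => P a (extSeq d n s))).card : ℝ) / ((2 * d : ℕ) : ℝ) ^ n := fun a => probN_eq n _
  simp only [hrw]
  rw [← Finset.sum_div, div_le_one (denom_pos hd n)]
  have hcard : ∑ a ∈ I, ((Fintype.piFinset fun _ : Fin n => steps d).filter
      (fun s => P a (extSeq d n s))).card
      = (I.biUnion fun a => (Fintype.piFinset fun _ : Fin n => steps d).filter
          (fun s => P a (extSeq d n s))).card := by
    rw [Finset.card_biUnion]
    intro a ha b hb hab
    rw [Function.onFun, Finset.disjoint_left]
    intro s hsa hsb
    rw [Finset.mem_filter] at hsa hsb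
    exact hdisj a ha b hb hab _ hsa.2 hsb.2
  rw [← Nat.cast_sum, hcard]
  have h2 : (I.biUnion fun a => (Fintype.piFinset fun _ : Fin n => steps d).filter
      (fun s => P a (extSeq d n s))).card ≤ (2 * d) ^ n := by
    rw [← card_piFinset_steps (d := d) n]
    apply Finset.card_le_card
    intro s hs
    rw [Finset.mem_biUnion] at hs
    obtain ⟨a, _, hs⟩ := hs
    exact (Finset.mem_filter.1 hs).1
  exact_mod_cast h2

lemma probN_false (n : ℕ) : probN d n (fun _ => False) = 0 := by
  classical
  simp [probN_eq]

lemma probN_true (hd : 0 < d) (n : ℕ) : probN d n (fun _ => True) = 1 := by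
  classical
  rw [probN_eq, div_eq_one_iff_eq (ne_of_gt (denom_pos hd n))]
  rw [show ((2 * d : ℕ) : ℝ) ^ n = (((2 * d) ^ n : ℕ) : ℝ) by push_cast; ring]
  norm_cast
  rw [← card_piFinset_steps (d := d) n]
  congr 1
  rw [filter_inst]
  exact Finset.filter_true_of_mem (fun _ _ => trivial)

lemma probN_or_le (hd : 0 < d) (n : ℕ) (P Q : (ℕ → V d) → Prop) :
    probN d n (fun s => P s ∨ Q s) ≤ probN d n P + probN d n Q := by
  classical
  simp only [probN_eq]
  rw [← add_div, div_le_div_iff_of_pos_right (denom_pos hd n), ← Nat.cast_add,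
    Nat.cast_le]
  rw [filter_inst]
  apply le_trans _ (Finset.card_union_le _ _)
  apply Finset.card_le_card
  intro s hs
  rw [Finset.mem_filter] at hs
  rw [Finset.mem_union, Finset.mem_filter, Finset.mem_filter]
  tauto

lemma one_le_probN_add_not (hd : 0 < d) (n : ℕ) (P : (ℕ → V d) → Prop) :
    1 ≤ probN d n P + probN d n (fun s => ¬ P s) := by
  calc (1:ℝ) = probN d n (fun _ => True) := (probN_true hd n).symm
    _ ≤ probN d n (fun s => P s ∨ ¬ P s) := by
        apply probN_mono hd
        intro s _
        exact Classical.em _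
    _ ≤ _ := probN_or_le hd n _ _

lemma probN_mem_le_sum (hd : 0 < d) (n : ℕ) (S : Finset (V d)) (g : (ℕ → V d) → V d) :
    probN d n (fun s => g s ∈ S) ≤ ∑ z ∈ S, probN d n (fun s => g s = z) := by
  classical
  induction S using Finset.induction with
  | empty =>
      simp only [Finset.sum_empty]
      calc probN d n (fun s => g s ∈ (∅ : Finset (V d)))
          ≤ probN d n (fun _ => False) := probN_mono hd n (fun s hs => by simpa using hs)
        _ = 0 := probN_false n
  | @insert a S ha ih =>
      rw [Finset.sum_insert ha]
      calc probN d n (fun s => g s ∈ insert a S)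
          ≤ probN d n (fun s => g s = a ∨ g s ∈ S) :=
            probN_mono hd n (fun s hs => by simpa using hs)
        _ ≤ probN d n (fun s => g s = a) + probN d n (fun s => g s ∈ S) :=
            probN_or_le hd n _ _
        _ ≤ _ := by linarith

lemma card_mul_card_le {α β γ : Type*} (F₁ : Finset α) (F₂ : Finset β) (F₃ : Finset γ)
    (f : α → β → γ) (hmem : ∀ a ∈ F₁, ∀ b ∈ F₂, f a b ∈ F₃)
    (hinj : ∀ a a' b b', f a b = f a' b' → a = a' ∧ b = b') :
    F₁.card * F₂.card ≤ F₃.card := by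
  classical
  rw [← Finset.card_product]
  apply Finset.card_le_card_of_injOn (fun p => f p.1 p.2)
  · rintro ⟨a, b⟩ hab
    rw [Finset.mem_coe, Finset.mem_product] at hab
    exact hmem a hab.1 b hab.2
  · rintro ⟨a, b⟩ _ ⟨a', b'⟩ _ h
    obtain ⟨h1, h2⟩ := hinj a a' b b' h
    simp [h1, h2]

lemma pos_apply (x : V d) (s : ℕ → V d) (k : ℕ) (i : Fin d) :
    pos x s k i = x i + ∑ j ∈ Finset.range k, s j i := by
  simp [pos, Finset.sum_apply]

lemma sum_steps_coord (i : Fin d) : ∑ v ∈ steps d, v i = (0:ℤ) := by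
  rw [steps, Finset.sum_image (fun x _ y _ h => steps_inj h)]
  rw [Fintype.sum_prod_type]
  apply Finset.sum_eq_zero
  intro p _
  rw [Fintype.sum_bool]
  by_cases h : i = p <;> simp [h]

lemma sum_steps_coord_sq (i : Fin d) : ∑ v ∈ steps d, (v i)^2 = (2:ℤ) := by
  rw [steps, Finset.sum_image (fun x _ y _ h => steps_inj h)]
  rw [Fintype.sum_prod_type]
  have h1 : ∀ p : Fin d, (∑ b : Bool,
      ((if i = p then (if b then (1:ℤ) else -1) else 0))^2) = if i = p then 2 else 0 := by
    intro p
    rw [Fintype.sum_bool]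
    by_cases h : i = p <;> simp [h]
  calc ∑ p : Fin d, ∑ b : Bool, ((if i = p then (if b then (1:ℤ) else -1) else 0))^2
      = ∑ p : Fin d, if i = p then 2 else 0 := Finset.sum_congr rfl (fun p _ => h1 p)
    _ = 2 := by rw [Finset.sum_ite_eq]; simp

lemma pos_ext_coord (k : ℕ) (s : Fin k → V d) (i : Fin d) :
    pos 0 (extSeq d k s) k i = ∑ j : Fin k, s j i := by
  rw [pos_apply]
  rw [show (0:V d) i = 0 from rfl, zero_add]
  rw [← Fin.sum_univ_eq_sum_range (fun j => extSeq d k s j i) k]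
  apply Finset.sum_congr rfl
  intro j _
  simp [extSeq]

lemma prod_sum_step (k : ℕ) (i : Fin d) (j j' : Fin k) :
    ∑ s ∈ Fintype.piFinset (fun _ : Fin k => steps d), (s j i) * (s j' i)
      = ∏ u : Fin k, (∑ v ∈ steps d, (if u = j then v i else 1) * (if u = j' then v i else 1)) := by
  rw [Finset.prod_univ_sum]
  apply Finset.sum_congr rfl
  intro s _
  rw [Finset.prod_mul_distrib, Finset.prod_ite_eq' Finset.univ j (fun u => s u i),
    Finset.prod_ite_eq' Finset.univ j' (fun u => s u i)]
  simp

lemma sum_sq_piFinset (k : ℕ) :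
    ∑ s ∈ Fintype.piFinset (fun _ : Fin k => steps d), (∑ i : Fin d, (∑ j : Fin k, s j i)^2)
      = (k : ℤ) * (2*(d:ℤ))^k := by
  rcases k with _ | m
  · simp
  set k := m + 1 with hk
  rw [Finset.sum_comm]
  have hinner : ∀ i : Fin d, ∑ s ∈ Fintype.piFinset (fun _ : Fin k => steps d),
      (∑ j : Fin k, s j i)^2 = (k:ℤ) * (2 * (2*(d:ℤ))^m) := by
    intro i
    have hexp : ∀ s : Fin k → V d, (∑ j : Fin k, s j i)^2
        = ∑ j : Fin k, ∑ j' : Fin k, (s j i) * (s j' i) := by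
      intro s
      rw [pow_two, Finset.sum_mul_sum]
    calc ∑ s ∈ Fintype.piFinset (fun _ : Fin k => steps d), (∑ j : Fin k, s j i)^2
        = ∑ s ∈ Fintype.piFinset (fun _ : Fin k => steps d),
            ∑ j : Fin k, ∑ j' : Fin k, (s j i) * (s j' i) :=
          Finset.sum_congr rfl (fun s _ => hexp s)
      _ = ∑ j : Fin k, ∑ j' : Fin k, ∑ s ∈ Fintype.piFinset (fun _ : Fin k => steps d),
            (s j i) * (s j' i) := by
          rw [Finset.sum_comm]
          exact Finset.sum_congr rfl (fun j _ => Finset.sum_comm)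
      _ = ∑ j : Fin k, ∑ j' : Fin k, (if j = j' then (2:ℤ) * (2*(d:ℤ))^m else 0) := by
          apply Finset.sum_congr rfl
          intro j _
          apply Finset.sum_congr rfl
          intro j' _
          rw [prod_sum_step]
          by_cases hjj : j = j'
          · subst hjj
            rw [if_pos rfl]
            have hfac : ∀ u : Fin k, (∑ v ∈ steps d,
                (if u = j then v i else 1) * (if u = j then v i else 1))
                = if u = j then 2 else (2*(d:ℤ)) := by
              intro u
              by_cases hu : u = j
              · subst hu
                simp only [if_pos rfl, eq_self_iff_true, if_true, ← pow_two]
                rw [sum_steps_coord_sq i]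
              · simp only [if_neg hu]
                rw [show (∑ v ∈ steps d, (1:ℤ) * 1) = ∑ v ∈ steps d, 1 by simp]
                rw [Finset.sum_const, card_steps]
                push_cast
                ring
            rw [Finset.prod_congr rfl (fun u _ => hfac u)]
            rw [← Finset.mul_prod_erase Finset.univ _ (Finset.mem_univ j)]
            rw [if_pos rfl]
            congr 1
            rw [Finset.prod_congr rfl (fun u hu => if_neg (Finset.mem_erase.1 hu).1)]
            rw [Finset.prod_const]
            congr 1
            rw [Finset.card_erase_of_mem (Finset.mem_univ j)]
            simp [hk]
          · rw [if_neg hjj]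
            apply Finset.prod_eq_zero (Finset.mem_univ j)
            simp [hjj, sum_steps_coord]
      _ = (k:ℤ) * (2 * (2*(d:ℤ))^m) := by
          have : ∀ j : Fin k, ∑ j' : Fin k, (if j = j' then (2:ℤ) * (2*(d:ℤ))^m else 0)
              = (2:ℤ) * (2*(d:ℤ))^m := by
            intro j
            rw [Finset.sum_ite_eq]
            simp
          rw [Finset.sum_congr rfl (fun j _ => this j)]
          rw [Finset.sum_const]
          simp [hk]
  rw [Finset.sum_congr rfl (fun i _ => hinner i)]
  rw [Finset.sum_const]
  simp only [Finset.card_univ, Fintype.card_fin, nsmul_eq_mul]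
  rw [pow_succ]
  push_cast
  ring

lemma cheb_main (k T : ℕ) (hT : 0 < T) (F : Finset (Fin k → V d))
    (hsub : F ⊆ Fintype.piFinset (fun _ : Fin k => steps d))
    (hev : ∀ s ∈ F, ¬ ∀ i : Fin d, (pos 0 (extSeq d k s) k i).natAbs ≤ T) :
    (F.card : ℝ) * (T:ℝ)^2 ≤ (k:ℝ) * ((2 * d : ℕ) : ℝ) ^ k := by
  have key : (F.card : ℤ) * (T:ℤ)^2 ≤ (k:ℤ) * (2*(d:ℤ))^k := by
    calc (F.card : ℤ) * (T:ℤ)^2 = ∑ _s ∈ F, (T:ℤ)^2 := by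
          rw [Finset.sum_const, nsmul_eq_mul]
      _ ≤ ∑ s ∈ F, ∑ i : Fin d, (∑ j : Fin k, s j i)^2 := by
          apply Finset.sum_le_sum
          intro s hs
          obtain ⟨i, hi⟩ := not_forall.1 (hev s hs)
          have h1 : (T:ℤ) < |pos 0 (extSeq d k s) k i| := by
            rw [Int.abs_eq_natAbs]
            exact_mod_cast Nat.lt_of_not_le (fun hcon => hi hcon)
          have h2 : (T:ℤ)^2 ≤ (∑ j : Fin k, s j i)^2 := by
            rw [← pos_ext_coord k s i]
            calc (T:ℤ)^2 ≤ |pos 0 (extSeq d k s) k i|^2 :=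
                  pow_le_pow_left₀ (by positivity) h1.le 2
              _ = (pos 0 (extSeq d k s) k i)^2 := sq_abs _
          refine h2.trans (Finset.single_le_sum
            (f := fun i : Fin d => (∑ j : Fin k, s j i)^2)
            (fun i _ => sq_nonneg _) (Finset.mem_univ i))
      _ ≤ ∑ s ∈ Fintype.piFinset (fun _ : Fin k => steps d), ∑ i : Fin d, (∑ j : Fin k, s j i)^2 := by
          apply Finset.sum_le_sum_of_subset_of_nonneg hsub
          intro s _ _
          positivity
      _ = (k:ℤ) * (2*(d:ℤ))^k := sum_sq_piFinset k
  calc (F.card : ℝ) * (T:ℝ)^2 = (((F.card : ℤ) * (T:ℤ)^2 : ℤ) : ℝ) := by push_cast; ring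
    _ ≤ (((k:ℤ) * (2*(d:ℤ))^k : ℤ) : ℝ) := by exact_mod_cast key
    _ = (k:ℝ) * ((2 * d : ℕ) : ℝ) ^ k := by push_cast; ring

lemma cheb (hd : 0 < d) (k T : ℕ) (hT : 0 < T) :
    probN d k (fun s => ¬ ∀ i : Fin d, (pos 0 s k i).natAbs ≤ T) ≤ (k : ℝ) / (T:ℝ)^2 := by
  classical
  rw [probN_eq, div_le_div_iff₀ (denom_pos hd k) (by positivity), filter_inst]
  apply cheb_main k T hT
  · intro s hs
    rw [Finset.mem_filter] at hs
    exact hs.1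
  · intro s hs
    rw [Finset.mem_filter] at hs
    exact hs.2

lemma extSeq_append_lt (k m : ℕ) (s₁ : Fin k → V d) (s₂ : Fin m → V d) (i : ℕ) (h : i < k) :
    extSeq d (k+m) (Fin.append s₁ s₂) i = extSeq d k s₁ i := by
  have hikm : i < k + m := lt_of_lt_of_le h (Nat.le_add_right _ _)
  simp only [extSeq, dif_pos h, dif_pos hikm]
  have he : (⟨i, hikm⟩ : Fin (k+m)) = Fin.castAdd m ⟨i, h⟩ := rfl
  rw [he, Fin.append_left]

lemma extSeq_append_ge (k m : ℕ) (s₁ : Fin k → V d) (s₂ : Fin m → V d) (u : ℕ) (h : u < m) :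
    extSeq d (k+m) (Fin.append s₁ s₂) (k + u) = extSeq d m s₂ u := by
  have hikm : k + u < k + m := by omega
  simp only [extSeq, dif_pos h, dif_pos hikm]
  have he : (⟨k + u, hikm⟩ : Fin (k+m)) = Fin.natAdd k ⟨u, h⟩ := rfl
  rw [he, Fin.append_right]

lemma pos_append_left (y : V d) (k m : ℕ) (s₁ : Fin k → V d) (s₂ : Fin m → V d) (j : ℕ)
    (hj : j ≤ k) : pos y (extSeq d (k+m) (Fin.append s₁ s₂)) j = pos y (extSeq d k s₁) j := by
  unfold pos
  congr 1
  apply Finset.sum_congr rfl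
  intro i hi
  rw [Finset.mem_range] at hi
  exact extSeq_append_lt k m s₁ s₂ i (lt_of_lt_of_le hi hj)

lemma pos_append_right (y : V d) (k m : ℕ) (s₁ : Fin k → V d) (s₂ : Fin m → V d) (t : ℕ)
    (ht : t ≤ m) : pos y (extSeq d (k+m) (Fin.append s₁ s₂)) (k + t)
      = pos (pos y (extSeq d (k+m) (Fin.append s₁ s₂)) k) (extSeq d m s₂) t := by
  unfold pos
  rw [Finset.sum_range_add, ← add_assoc]
  congr 1
  apply Finset.sum_congr rfl
  intro u hu
  rw [Finset.mem_range] at hu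
  exact extSeq_append_ge k m s₁ s₂ u (lt_of_lt_of_le hu ht)

lemma probN_mul_le (hd : 0 < d) (y x : V d) (A : Set (V d)) (k m : ℕ) :
    probN d k (fun s => pos y s k = x) *
      probN d m (fun s => ∀ j, 1 ≤ j → j ≤ m → pos x s j ∉ A) ≤
    probN d (k+m) (fun s => pos y s k = x ∧ ∀ j, k < j → j ≤ k + m → pos y s j ∉ A) := by
  classical
  simp only [probN_eq]
  rw [div_mul_div_comm, pow_add, div_le_div_iff_of_pos_right (by positivity),
    ← Nat.cast_mul, Nat.cast_le]
  rw [filter_inst]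
  rw [filter_inst (p := fun s : Fin m → V d => ∀ j, 1 ≤ j → j ≤ m → pos x (extSeq d m s) j ∉ A)]
  rw [filter_inst (p := fun s : Fin (k+m) → V d => pos y (extSeq d (k+m) s) k = x ∧
    ∀ j, k < j → j ≤ k + m → pos y (extSeq d (k+m) s) j ∉ A)]
  apply card_mul_card_le _ _ _ (fun s₁ s₂ => Fin.append s₁ s₂)
  · intro a ha b hb
    rw [Finset.mem_filter] at ha hb ⊢
    refine ⟨?_, ?_, ?_⟩
    · rw [Fintype.mem_piFinset]
      intro u
      refine Fin.addCases ?_ ?_ u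
      · intro i; rw [Fin.append_left]; exact Fintype.mem_piFinset.1 ha.1 i
      · intro i; rw [Fin.append_right]; exact Fintype.mem_piFinset.1 hb.1 i
    · rw [pos_append_left y k m a b k le_rfl]; exact ha.2
    · intro j hj1 hj2
      obtain ⟨t, rfl⟩ : ∃ t, j = k + t := ⟨j - k, by omega⟩
      have ht : t ≤ m := by omega
      rw [pos_append_right y k m a b t ht, pos_append_left y k m a b k le_rfl, ha.2]
      exact hb.2 t (by omega) ht
  · intro a a' b b' h
    constructor
    · funext i
      have h2 := congrFun h (Fin.castAdd m i)
      rwa [Fin.append_left, Fin.append_left] at h2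
    · funext i
      have h2 := congrFun h (Fin.natAdd k i)
      rwa [Fin.append_right, Fin.append_right] at h2

lemma last_exit (hd : 0 < d) (Λ : Finset (V d)) (y : V d) (N : ℕ) :
    ∑ k ∈ Finset.range (N+1), ∑ x ∈ Λ,
      probN d k (fun s => pos y s k = x) * esc d ↑Λ x ≤ 1 := by
  classical
  have step : ∀ k ∈ Finset.range (N+1), ∀ x ∈ Λ,
      probN d k (fun s => pos y s k = x) * esc d ↑Λ x
        ≤ probN d N (fun s => pos y s k = x ∧
            ∀ j, k < j → j ≤ N → pos y s j ∉ (↑Λ : Set (V d))) := by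
    intro k hk x hx
    rw [Finset.mem_range] at hk
    obtain ⟨m, rfl⟩ : ∃ m, N = k + m := ⟨N - k, by omega⟩
    calc probN d k (fun s => pos y s k = x) * esc d ↑Λ x
        ≤ probN d k (fun s => pos y s k = x) *
            probN d m (fun s => ∀ j, 1 ≤ j → j ≤ m → pos x s j ∉ (↑Λ : Set (V d))) :=
          mul_le_mul_of_nonneg_left (esc_le _ _ m) (probN_nonneg _ _)
      _ ≤ _ := probN_mul_le hd y x _ k m
  calc ∑ k ∈ Finset.range (N+1), ∑ x ∈ Λ, probN d k (fun s => pos y s k = x) * esc d ↑Λ x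
      ≤ ∑ k ∈ Finset.range (N+1), ∑ x ∈ Λ, probN d N (fun s => pos y s k = x ∧
          ∀ j, k < j → j ≤ N → pos y s j ∉ (↑Λ : Set (V d))) :=
        Finset.sum_le_sum (fun k hk => Finset.sum_le_sum (fun x hx => step k hk x hx))
    _ = ∑ p ∈ (Finset.range (N+1)) ×ˢ Λ, probN d N (fun s => pos y s p.1 = p.2 ∧
          ∀ j, p.1 < j → j ≤ N → pos y s j ∉ (↑Λ : Set (V d))) := by
        rw [Finset.sum_product]
    _ ≤ 1 := by
        apply sum_probN_le_one hd N
        rintro ⟨k, x⟩ hkx ⟨k', x'⟩ hkx' hne s h h'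
        rw [Finset.mem_product, Finset.mem_range] at hkx hkx'
        rcases lt_trichotomy k k' with hlt | heq | hlt
        · exact h.2 k' hlt (by omega) (by rw [h'.1]; exact Finset.mem_coe.2 hkx'.2)
        · apply hne
          have e1 : pos y s k = x := h.1
          have e2 : pos y s k' = x' := h'.1
          have hxx : x = x' := by rw [← e1, ← e2, heq]
          simp [heq, hxx]
        · exact h'.2 k hlt (by omega) (by rw [h.1]; exact Finset.mem_coe.2 hkx.2)

lemma cap_bound (hd5 : 5 ≤ d) (Λ : Finset (V d)) (ρ : ℕ) (hρ : 1 ≤ ρ) :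
    ∑ x ∈ Λ.filter (fun x => ∀ i, (x i).natAbs ≤ ρ), esc d (↑Λ) x
      ≤ (7:ℝ)^d * (ρ:ℝ)^(d-2) := by
  classical
  have hd0 : 0 < d := by omega
  have hρr : (1:ℝ) ≤ (ρ:ℝ) := by exact_mod_cast hρ
  set T := 2*ρ with hT
  set N := 2*ρ^2 with hN
  set R := 3*ρ with hR
  set B : Finset (V d) := Fintype.piFinset (fun _ : Fin d => Finset.Icc (-(R:ℤ)) (R:ℤ)) with hB
  set Λ' := Λ.filter (fun x => ∀ i, (x i).natAbs ≤ ρ) with hΛ'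
  set S := ∑ x ∈ Λ', esc d (↑Λ) x with hS
  have hcardB : (B.card : ℝ) ≤ ((7*ρ : ℕ) : ℝ)^d := by
    have h1 : B.card = (2*R+1)^d := by
      rw [hB, Fintype.card_piFinset]
      have h2 : (Finset.Icc (-(R:ℤ)) (R:ℤ)).card = 2*R+1 := by
        rw [Int.card_Icc]; omega
      simp [h2]
    rw [h1]
    have h3 : (2*R+1 : ℕ) ≤ 7*ρ := by omega
    exact_mod_cast Nat.pow_le_pow_left h3 d
  have hker : ∀ x ∈ Λ', ∀ k ∈ Finset.range (N+1),
      (1/2 : ℝ) ≤ ∑ y ∈ B, probN d k (fun s => pos y s k = x) := by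
    intro x hx k hk
    rw [hΛ', Finset.mem_filter] at hx
    rw [Finset.mem_range] at hk
    have hxb : ∀ i, (x i).natAbs ≤ ρ := hx.2
    have hcg : ∀ y : V d, probN d k (fun s => pos y s k = x)
        = probN d k (fun s => pos 0 s k = x - y) := by
      intro y
      apply probN_congr
      intro s
      unfold pos
      rw [zero_add]
      constructor
      · intro h; rw [← h]; abel
      · intro h; rw [h]; abel
    have hmono : probN d k (fun s => ∀ i, (pos 0 s k i).natAbs ≤ T)
        ≤ ∑ y ∈ B, probN d k (fun s => pos 0 s k = x - y) := by
      have himg : ∑ y ∈ B, probN d k (fun s => pos 0 s k = x - y)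
          = ∑ z ∈ B.image (fun y => x - y), probN d k (fun s => pos 0 s k = z) := by
        rw [Finset.sum_image]
        intro a _ b _ hab
        exact sub_right_injective hab
      rw [himg]
      refine le_trans (probN_mono hd0 k ?_) (probN_mem_le_sum hd0 k _ _)
      intro s hs
      rw [Finset.mem_image]
      refine ⟨x - pos 0 s k, ?_, sub_sub_cancel x (pos 0 s k)⟩
      rw [hB, Fintype.mem_piFinset]
      intro i
      rw [Finset.mem_Icc]
      have h1 := hxb i
      have h2 := hs i
      have h3 : (x - pos 0 s k) i = x i - pos 0 s k i := rfl
      rw [h3]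
      omega
    have hchb : probN d k (fun s => ¬ ∀ i, (pos 0 s k i).natAbs ≤ T) ≤ 1/2 := by
      refine le_trans (cheb hd0 k T (by omega)) ?_
      have hk' : (k:ℝ) ≤ 2*(ρ:ℝ)^2 := by
        have h4 : k ≤ 2*ρ^2 := by omega
        exact_mod_cast h4
      have hTr : ((T:ℕ):ℝ) = 2*(ρ:ℝ) := by rw [hT]; push_cast; ring
      rw [hTr, div_le_div_iff₀ (by nlinarith) (by norm_num)]
      nlinarith
    have h12 : (1/2:ℝ) ≤ probN d k (fun s => ∀ i, (pos 0 s k i).natAbs ≤ T) := by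
      have h5 := one_le_probN_add_not hd0 k (fun s => ∀ i, (pos 0 s k i).natAbs ≤ T)
      linarith
    calc (1/2:ℝ) ≤ probN d k (fun s => ∀ i, (pos 0 s k i).natAbs ≤ T) := h12
      _ ≤ ∑ y ∈ B, probN d k (fun s => pos 0 s k = x - y) := hmono
      _ = ∑ y ∈ B, probN d k (fun s => pos y s k = x) :=
          Finset.sum_congr rfl (fun y _ => (hcg y).symm)
  have hSnn : 0 ≤ S := Finset.sum_nonneg (fun x _ => esc_nonneg _ _)
  have hmain : ((N:ℝ)+1) * ((1/2) * S) ≤ ((7*ρ:ℕ):ℝ)^d := by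
    have hA : ∑ y ∈ B, ∑ k ∈ Finset.range (N+1), ∑ x ∈ Λ,
        probN d k (fun s => pos y s k = x) * esc d (↑Λ) x ≤ (B.card : ℝ) := by
      calc ∑ y ∈ B, ∑ k ∈ Finset.range (N+1), ∑ x ∈ Λ,
          probN d k (fun s => pos y s k = x) * esc d (↑Λ) x
          ≤ ∑ _y ∈ B, (1:ℝ) := Finset.sum_le_sum (fun y _ => last_exit hd0 Λ y N)
        _ = B.card := by rw [Finset.sum_const]; simp
    have hre : ∑ y ∈ B, ∑ k ∈ Finset.range (N+1), ∑ x ∈ Λ,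
        probN d k (fun s => pos y s k = x) * esc d (↑Λ) x
        = ∑ k ∈ Finset.range (N+1), ∑ x ∈ Λ,
            (∑ y ∈ B, probN d k (fun s => pos y s k = x)) * esc d (↑Λ) x := by
      rw [Finset.sum_comm]
      apply Finset.sum_congr rfl
      intro k _
      rw [Finset.sum_comm]
      apply Finset.sum_congr rfl
      intro x _
      rw [Finset.sum_mul]
    calc ((N:ℝ)+1) * ((1/2) * S)
        = ∑ _k ∈ Finset.range (N+1), ∑ x ∈ Λ', (1/2) * esc d (↑Λ) x := by
          rw [← Finset.mul_sum, Finset.sum_const, Finset.card_range, nsmul_eq_mul]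
          push_cast
          ring
      _ ≤ ∑ k ∈ Finset.range (N+1), ∑ x ∈ Λ',
            (∑ y ∈ B, probN d k (fun s => pos y s k = x)) * esc d (↑Λ) x := by
          apply Finset.sum_le_sum
          intro k hk
          apply Finset.sum_le_sum
          intro x hx
          exact mul_le_mul_of_nonneg_right (hker x hx k hk) (esc_nonneg _ _)
      _ ≤ ∑ k ∈ Finset.range (N+1), ∑ x ∈ Λ,
            (∑ y ∈ B, probN d k (fun s => pos y s k = x)) * esc d (↑Λ) x := by
          apply Finset.sum_le_sum
          intro k _
          apply Finset.sum_le_sum_of_subset_of_nonneg (Finset.filter_subset _ _)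
          intro x _ _
          exact mul_nonneg (Finset.sum_nonneg (fun y _ => probN_nonneg _ _)) (esc_nonneg _ _)
      _ = ∑ y ∈ B, ∑ k ∈ Finset.range (N+1), ∑ x ∈ Λ,
            probN d k (fun s => pos y s k = x) * esc d (↑Λ) x := hre.symm
      _ ≤ (B.card : ℝ) := hA
      _ ≤ ((7*ρ:ℕ):ℝ)^d := hcardB
  -- conclude
  have hNr : (2:ℝ)*(ρ:ℝ)^2 ≤ (N:ℝ)+1 := by
    have : ((N:ℕ):ℝ) = 2*(ρ:ℝ)^2 := by rw [hN]; push_cast; ring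
    linarith
  have h6 : (ρ:ℝ)^2 * S ≤ (7:ℝ)^d * ((ρ:ℝ)^(d-2) * (ρ:ℝ)^2) := by
    have h7 : ((7*ρ:ℕ):ℝ)^d = (7:ℝ)^d * (ρ:ℝ)^d := by push_cast; rw [mul_pow]
    have h8 : (ρ:ℝ)^d = (ρ:ℝ)^(d-2) * (ρ:ℝ)^2 := by
      rw [← pow_add]
      congr 1
      omega
    have h9 : (ρ:ℝ)^2 * S = (2*(ρ:ℝ)^2) * ((1/2) * S) := by ring
    rw [h9, ← h8, ← h7]
    calc (2*(ρ:ℝ)^2) * ((1/2) * S) ≤ ((N:ℝ)+1) * ((1/2) * S) := by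
          apply mul_le_mul_of_nonneg_right hNr
          positivity
      _ ≤ _ := hmain
  have hρ2 : (0:ℝ) < (ρ:ℝ)^2 := by positivity
  calc S = ((ρ:ℝ)^2 * S) / (ρ:ℝ)^2 := by field_simp
    _ ≤ ((7:ℝ)^d * ((ρ:ℝ)^(d-2) * (ρ:ℝ)^2)) / (ρ:ℝ)^2 := by
        exact div_le_div_of_nonneg_right h6 hρ2.le
    _ = (7:ℝ)^d * (ρ:ℝ)^(d-2) := by field_simp

def msup {d : ℕ} (x : V d) : ℕ := Finset.univ.sup (fun i => (x i).natAbs)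

lemma natAbs_le_msup (x : V d) (i : Fin d) : (x i).natAbs ≤ msup x := by
  unfold msup
  exact Finset.le_sup (f := fun i => (x i).natAbs) (Finset.mem_univ i)

lemma msup_le_nrm (hd0 : 0 < d) (x : V d) : ((msup x : ℕ) : ℝ) ≤ nrm x := by
  obtain ⟨i₀, -, hi₀⟩ := Finset.exists_mem_eq_sup (Finset.univ : Finset (Fin d))
    ⟨⟨0, hd0⟩, Finset.mem_univ _⟩ (fun i => (x i).natAbs)
  rw [msup, hi₀]
  have h1 : ((x i₀).natAbs : ℝ) = |((x i₀ : ℤ) : ℝ)| := by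
    rw [Nat.cast_natAbs, Int.cast_abs]
  rw [h1, nrm]
  have h2 : |((x i₀ : ℤ):ℝ)| = Real.sqrt (((x i₀:ℤ):ℝ)^2) := (Real.sqrt_sq_eq_abs _).symm
  rw [h2]
  apply Real.sqrt_le_sqrt
  exact Finset.single_le_sum (fun i _ => sq_nonneg ((x i : ℤ):ℝ)) (Finset.mem_univ i₀)

lemma nrm_nonneg (x : V d) : 0 ≤ nrm x := Real.sqrt_nonneg _

theorem sum_green_esc_le' {d : ℕ} (hd : 5 ≤ d) :
    ∃ C₁ : ℝ, 0 < C₁ ∧ ∀ r : ℝ, 1 ≤ r → ∀ Λ : Finset (V d),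
      (∀ x ∈ Λ, ∀ i, -(r / 2) ≤ (x i : ℝ) ∧ (x i : ℝ) < r / 2) →
      ∑ x ∈ Λ, (1 / (nrm x ^ (d - 4) + 1)) * esc d (↑Λ) x ≤ C₁ * r ^ 2 := by
  classical
  refine ⟨7^d * 2^(2*d) * 256, by positivity, ?_⟩
  intro r hr Λ hΛ
  have hd0 : 0 < d := by omega
  set n := ⌈r⌉₊ with hn
  have hn1 : 1 ≤ n := Nat.one_le_ceil_iff.2 (by linarith)
  set J := Nat.log 2 n + 2 with hJ
  have hcover : ∀ x ∈ Λ, Nat.log 2 (msup x + 1) ∈ Finset.range (J+1) := by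
    intro x hx
    rw [Finset.mem_range]
    have hmx : ((msup x : ℕ) : ℝ) ≤ r/2 := by
      obtain ⟨i₀, -, hi₀⟩ := Finset.exists_mem_eq_sup (Finset.univ : Finset (Fin d))
        ⟨⟨0, hd0⟩, Finset.mem_univ _⟩ (fun i => (x i).natAbs)
      rw [msup, hi₀]
      have hb := hΛ x hx i₀
      have h1 : ((x i₀).natAbs : ℝ) = |((x i₀ : ℤ) : ℝ)| := by
        rw [Nat.cast_natAbs, Int.cast_abs]
      rw [h1]
      rw [abs_le]
      constructor <;> [linarith [hb.1]; linarith [hb.2]]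
    have h2n : msup x + 1 ≤ 2*n := by
      have hrn : r ≤ (n:ℝ) := Nat.le_ceil r
      have hcast : ((msup x + 1 : ℕ) : ℝ) ≤ ((2*n : ℕ):ℝ) := by
        push_cast
        linarith
      exact_mod_cast hcast
    have hpow : 2^(Nat.log 2 (msup x + 1)) ≤ 2^J := by
      calc 2^(Nat.log 2 (msup x + 1)) ≤ msup x + 1 := Nat.pow_log_le_self 2 (by omega)
        _ ≤ 2*n := h2n
        _ ≤ 2^J := by
            rw [hJ]
            have hl := Nat.lt_pow_succ_log_self (by norm_num : 1 < 2) n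
            calc 2*n ≤ 2*(2^(Nat.log 2 n + 1)) := by omega
              _ = 2^(Nat.log 2 n + 2) := by ring
    have hle := (Nat.pow_le_pow_iff_right (by norm_num : 1 < 2)).1 hpow
    omega
  rw [← Finset.sum_fiberwise_of_maps_to hcover
    (fun x => (1 / (nrm x ^ (d - 4) + 1)) * esc d (↑Λ) x)]
  have hshell : ∀ j ∈ Finset.range (J+1),
      ∑ x ∈ Λ.filter (fun x => Nat.log 2 (msup x + 1) = j),
        (1 / (nrm x ^ (d - 4) + 1)) * esc d (↑Λ) x
        ≤ (7:ℝ)^d * 2^(2*d) * (4:ℝ)^j := by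
    intro j _
    have hw : ∀ x ∈ Λ.filter (fun x => Nat.log 2 (msup x + 1) = j),
        1 / (nrm x ^ (d-4) + 1) ≤ (2:ℝ)^(d-4) / (2:ℝ)^(j*(d-4)) := by
      intro x hxF
      rw [Finset.mem_filter] at hxF
      have hlog := hxF.2
      have hnn : 0 ≤ nrm x := nrm_nonneg x
      have hpj : (2:ℝ)^j ≤ nrm x + 1 := by
        have h1 : (2:ℕ)^j ≤ msup x + 1 := by
          rw [← hlog]; exact Nat.pow_log_le_self 2 (by omega)
        have h2 := msup_le_nrm hd0 x
        calc (2:ℝ)^j = (((2:ℕ)^j : ℕ):ℝ) := by push_cast; ring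
          _ ≤ ((msup x + 1 : ℕ):ℝ) := by exact_mod_cast h1
          _ = ((msup x : ℕ) : ℝ) + 1 := by push_cast; ring
          _ ≤ nrm x + 1 := by linarith
      have hkey : (2:ℝ)^(j*(d-4)) ≤ (2:ℝ)^(d-4) * (nrm x^(d-4) + 1) := by
        have hmax : nrm x + 1 ≤ 2 * max (nrm x) 1 := by
          have g1 := le_max_left (nrm x) 1
          have g2 := le_max_right (nrm x) 1
          linarith
        have hmaxp : (max (nrm x) 1)^(d-4) ≤ nrm x^(d-4) + 1 := by
          rcases le_total (nrm x) 1 with h | h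
          · rw [max_eq_right h, one_pow]
            have := pow_nonneg hnn (d-4)
            linarith
          · rw [max_eq_left h]
            linarith
        calc (2:ℝ)^(j*(d-4)) = ((2:ℝ)^j)^(d-4) := by rw [← pow_mul]
          _ ≤ (nrm x + 1)^(d-4) := pow_le_pow_left₀ (by positivity) hpj _
          _ ≤ (2 * max (nrm x) 1)^(d-4) := pow_le_pow_left₀ (by positivity) hmax _
          _ = (2:ℝ)^(d-4) * (max (nrm x) 1)^(d-4) := mul_pow _ _ _
          _ ≤ (2:ℝ)^(d-4) * (nrm x^(d-4)+1) :=
              mul_le_mul_of_nonneg_left hmaxp (by positivity)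
      rw [div_le_div_iff₀ (by positivity) (by positivity), one_mul]
      exact hkey
    have hsubF : Λ.filter (fun x => Nat.log 2 (msup x + 1) = j)
        ⊆ Λ.filter (fun x => ∀ i, (x i).natAbs ≤ 2^(j+1)) := by
      intro x hxF
      rw [Finset.mem_filter] at hxF ⊢
      refine ⟨hxF.1, fun i => ?_⟩
      have h1 := natAbs_le_msup x i
      have h2 : msup x + 1 < 2^(j+1) := by
        rw [← hxF.2]
        exact Nat.lt_pow_succ_log_self (by norm_num : 1 < 2) _
      omega
    have hesc : ∑ x ∈ Λ.filter (fun x => Nat.log 2 (msup x + 1) = j), esc d (↑Λ) x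
        ≤ (7:ℝ)^d * ((2^(j+1):ℕ):ℝ)^(d-2) := by
      refine le_trans (Finset.sum_le_sum_of_subset_of_nonneg hsubF
        (fun x _ _ => esc_nonneg _ _)) ?_
      exact cap_bound hd Λ (2^(j+1)) Nat.one_le_two_pow
    have hexp : (d-4) + (j+1)*(d-2) ≤ 2*d + (2*j + j*(d-4)) := by
      obtain ⟨q, rfl⟩ : ∃ q, d = q + 4 := ⟨d - 4, by omega⟩
      have e1 : q + 4 - 4 = q := by omega
      have e2 : q + 4 - 2 = q + 2 := by omega
      rw [e1, e2]
      have e3 : (j+1)*(q+2) = j*q + 2*j + q + 2 := by ring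
      rw [e3]
      linarith
    calc ∑ x ∈ Λ.filter (fun x => Nat.log 2 (msup x + 1) = j),
          (1 / (nrm x ^ (d - 4) + 1)) * esc d (↑Λ) x
        ≤ ∑ x ∈ Λ.filter (fun x => Nat.log 2 (msup x + 1) = j),
            ((2:ℝ)^(d-4) / (2:ℝ)^(j*(d-4))) * esc d (↑Λ) x := by
          apply Finset.sum_le_sum
          intro x hx
          exact mul_le_mul_of_nonneg_right (hw x hx) (esc_nonneg _ _)
      _ = ((2:ℝ)^(d-4) / (2:ℝ)^(j*(d-4))) *
            ∑ x ∈ Λ.filter (fun x => Nat.log 2 (msup x + 1) = j), esc d (↑Λ) x := by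
          rw [Finset.mul_sum]
      _ ≤ ((2:ℝ)^(d-4) / (2:ℝ)^(j*(d-4))) * ((7:ℝ)^d * ((2^(j+1):ℕ):ℝ)^(d-2)) :=
          mul_le_mul_of_nonneg_left hesc (by positivity)
      _ ≤ (7:ℝ)^d * 2^(2*d) * (4:ℝ)^j := by
          have hcast : ((2^(j+1):ℕ):ℝ) = (2:ℝ)^(j+1) := by push_cast; ring
          rw [hcast]
          have e4 : ((2:ℝ)^(d-4) / (2:ℝ)^(j*(d-4))) * ((7:ℝ)^d * ((2:ℝ)^(j+1))^(d-2))
              = (7:ℝ)^d * (2:ℝ)^((d-4) + (j+1)*(d-2)) / (2:ℝ)^(j*(d-4)) := by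
            rw [← pow_mul, pow_add]
            ring
          have e5 : (7:ℝ)^d * 2^(2*d) * (4:ℝ)^j
              = (7:ℝ)^d * (2:ℝ)^(2*d + (2*j + j*(d-4))) / (2:ℝ)^(j*(d-4)) := by
            rw [show (4:ℝ) = 2^2 by norm_num, ← pow_mul, pow_add, pow_add]
            field_simp
          rw [e4, e5]
          apply div_le_div_of_nonneg_right _ (by positivity)
          apply mul_le_mul_of_nonneg_left _ (by positivity)
          exact pow_le_pow_right₀ one_le_two hexp
  have hgeo : ∑ j ∈ Finset.range (J+1), (4:ℝ)^j ≤ 4^(J+1) := by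
    rw [geom_sum_eq (by norm_num : (4:ℝ) ≠ 1)]
    rw [div_le_iff₀ (by norm_num : (0:ℝ) < 4 - 1)]
    have := pow_nonneg (by norm_num : (0:ℝ) ≤ 4) (J+1)
    nlinarith
  have h2J : (2:ℝ)^J ≤ 8*r := by
    have hlogn : (2:ℕ)^(Nat.log 2 n) ≤ n := Nat.pow_log_le_self 2 (by omega)
    have hnat : (2:ℕ)^J ≤ 4*n := by
      rw [hJ]
      calc (2:ℕ)^(Nat.log 2 n + 2) = 4*2^(Nat.log 2 n) := by ring
        _ ≤ 4*n := by omega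
    have hnr : (n:ℝ) ≤ r + 1 := by
      have := Nat.ceil_lt_add_one (le_trans zero_le_one hr)
      rw [hn]
      linarith
    calc ((2:ℝ))^J = (((2:ℕ)^J : ℕ):ℝ) := by push_cast; ring
      _ ≤ ((4*n : ℕ):ℝ) := by exact_mod_cast hnat
      _ = 4*(n:ℝ) := by push_cast; ring
      _ ≤ 4*(r+1) := by linarith
      _ ≤ 8*r := by linarith
  have h4J : (4:ℝ)^(J+1) ≤ 256 * r^2 := by
    have e6 : (4:ℝ)^J = ((2:ℝ)^J)^2 := by
      rw [show (4:ℝ) = 2^2 by norm_num, ← pow_mul, mul_comm, pow_mul]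
    have e7 : (4:ℝ)^(J+1) = 4 * ((2:ℝ)^J)^2 := by
      rw [pow_succ, e6]
      ring
    have h2Jnn : (0:ℝ) ≤ (2:ℝ)^J := by positivity
    rw [e7]
    nlinarith
  calc ∑ j ∈ Finset.range (J+1), ∑ x ∈ Λ.filter (fun x => Nat.log 2 (msup x + 1) = j),
        (1 / (nrm x ^ (d - 4) + 1)) * esc d (↑Λ) x
      ≤ ∑ j ∈ Finset.range (J+1), (7:ℝ)^d * 2^(2*d) * (4:ℝ)^j :=
        Finset.sum_le_sum hshell
    _ = (7:ℝ)^d * 2^(2*d) * ∑ j ∈ Finset.range (J+1), (4:ℝ)^j := by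
        rw [Finset.mul_sum]
    _ ≤ (7:ℝ)^d * 2^(2*d) * (4:ℝ)^(J+1) :=
        mul_le_mul_of_nonneg_left hgeo (by positivity)
    _ ≤ (7:ℝ)^d * 2^(2*d) * (256 * r^2) :=
        mul_le_mul_of_nonneg_left h4J (by positivity)
    _ = 7^d * 2^(2*d) * 256 * r^2 := by ring

end Aux

/-- For `d ≥ 5` there is `C₁ > 0` such that for every `r ≥ 1` and every
`Λ ⊆ Q(r) = [-r/2, r/2)^d ∩ ℤ^d`,
`Σ_{x∈Λ} (‖x‖^{d-4} + 1)⁻¹ P_x(H_Λ^+ = ∞) ≤ C₁ r²`. -/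
theorem sum_green_esc_le {d : ℕ} (hd : 5 ≤ d) :
    ∃ C₁ : ℝ, 0 < C₁ ∧ ∀ r : ℝ, 1 ≤ r → ∀ Λ : Finset (V d),
      (∀ x ∈ Λ, ∀ i, -(r / 2) ≤ (x i : ℝ) ∧ (x i : ℝ) < r / 2) →
      ∑ x ∈ Λ, (1 / (nrm x ^ (d - 4) + 1)) * esc d (↑Λ) x ≤ C₁ * r ^ 2 :=
  sum_green_esc_le' hd

end SRW
end

section
/- Assume d ≥ 3. Under the same density hypothesis (ℓ_K(Q(x,r)) ≤ ρ r^d for all x ∈ rZ^d, with ρ ∈ (0,1), r ≥ 1), there is a constant C₃ > 0 such that for any z ∈ Z^d, Σ_{k∈K} 1{‖S(k)−z‖ ≥ 2r} · ‖S(k)−z‖^{−(d−2)} ≤ C₃ ρ^{1−2/d} |K|^{2/d}. -/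
open Filter Finset MeasureTheory
open scoped symmDiff ENNReal

namespace SRW

section AuxLemmas

lemma abs_coord_le_nrm {d : ℕ} (y : V d) (i : Fin d) : |(y i : ℝ)| ≤ nrm y := by
  calc |(y i : ℝ)| = Real.sqrt (((y i : ℝ)) ^ 2) := (Real.sqrt_sq_eq_abs _).symm
    _ ≤ nrm y := Real.sqrt_le_sqrt
        (Finset.single_le_sum (fun j _ => sq_nonneg ((y j : ℝ))) (Finset.mem_univ i))

open Classical in
lemma count_ball {d : ℕ} (hd1 : 1 ≤ d) {ρ : ℝ} (hρ : 0 < ρ) {r : ℕ} (hr : 1 ≤ r)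
    (S : ℕ → V d) (K : Finset ℕ)
    (hdens : ∀ m : V d, ((K.filter fun k => S k ∈ cube (r • m) (r : ℝ)).card : ℝ)
        ≤ ρ * (r : ℝ) ^ d)
    (z : V d) {t : ℝ} (hrt : (r : ℝ) ≤ t) :
    ((K.filter fun k => nrm (S k - z) ≤ t).card : ℝ) ≤ 4 ^ d * ρ * t ^ d := by
  set R : ℝ := (r : ℝ) with hR
  have hR1 : 1 ≤ R := by rw [hR]; exact_mod_cast hr
  have hR0 : 0 < R := by linarith
  have ht0 : 0 < t := lt_of_lt_of_le hR0 hrt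
  set lo : Fin d → ℤ := fun i => ⌈((z i : ℝ) - t - R / 2) / R⌉ with hlo
  set hi : Fin d → ℤ := fun i => ⌊((z i : ℝ) + t + R / 2) / R⌋ with hhi
  set box : Finset (V d) := Fintype.piFinset fun i => Finset.Icc (lo i) (hi i) with hbox
  have hsub : (K.filter fun k => nrm (S k - z) ≤ t) ⊆
      box.biUnion fun m => K.filter fun k => S k ∈ cube (r • m) R := by
    intro k hk
    rw [Finset.mem_filter] at hk
    obtain ⟨hkK, hkt⟩ := hk
    set m : V d := fun i => ⌊((S k i : ℝ)) / R + 1 / 2⌋ with hm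
    have hcoord : ∀ i, |(S k i : ℝ) - (z i : ℝ)| ≤ t := by
      intro i
      have := abs_coord_le_nrm (S k - z) i
      have e : (((S k - z) i : ℤ) : ℝ) = (S k i : ℝ) - (z i : ℝ) := by
        simp [Pi.sub_apply]
      rw [e] at this
      linarith
    have hfl : ∀ i, (m i : ℝ) ≤ (S k i : ℝ) / R + 1 / 2 ∧
        (S k i : ℝ) / R + 1 / 2 < m i + 1 :=
      fun i => ⟨Int.floor_le _, Int.lt_floor_add_one _⟩
    have key1 : ∀ i, (m i : ℝ) * R ≤ (S k i : ℝ) + R / 2 := by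
      intro i
      have h := mul_le_mul_of_nonneg_right (hfl i).1 hR0.le
      rw [add_mul, div_mul_cancel₀ _ (ne_of_gt hR0)] at h
      linarith
    have key2 : ∀ i, (S k i : ℝ) - R / 2 < (m i : ℝ) * R := by
      intro i
      have h := mul_lt_mul_of_pos_right (hfl i).2 hR0
      rw [add_mul, div_mul_cancel₀ _ (ne_of_gt hR0), add_mul, one_mul] at h
      linarith
    refine Finset.mem_biUnion.mpr ⟨m, ?_, ?_⟩
    · rw [hbox, Fintype.mem_piFinset]
      intro i
      rw [Finset.mem_Icc]
      have hz1 : (z i : ℝ) - t ≤ S k i := by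
        have h := abs_le.mp (hcoord i); linarith [h.1]
      have hz2 : (S k i : ℝ) ≤ (z i : ℝ) + t := by
        have h := abs_le.mp (hcoord i); linarith [h.2]
      constructor
      · rw [hlo]
        apply Int.ceil_le.mpr
        rw [div_le_iff₀ hR0]
        linarith [key2 i]
      · rw [hhi]
        apply Int.le_floor.mpr
        rw [le_div_iff₀ hR0]
        linarith [key1 i]
    · rw [Finset.mem_filter]
      refine ⟨hkK, fun i => ?_⟩
      have key : (((r • m) i : ℤ) : ℝ) = R * m i := by
        have e : (r • m) i = (r : ℤ) * m i := by
          simp [Pi.smul_apply]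
        rw [e, hR]; push_cast; ring
      rw [key]
      constructor
      · linarith [key1 i]
      · linarith [key2 i]
  have hIcc : ∀ i, ((Finset.Icc (lo i) (hi i)).card : ℝ) ≤ 4 * t / R := by
    intro i
    have h1 : ((hi i : ℤ) : ℝ) ≤ ((z i : ℝ) + t + R / 2) / R := Int.floor_le _
    have h2 : ((z i : ℝ) - t - R / 2) / R ≤ ((lo i : ℤ) : ℝ) := Int.le_ceil _
    have ht2 : 1 ≤ t / R := (one_le_div hR0).mpr hrt
    have e : ((z i : ℝ) + t + R / 2) / R - ((z i : ℝ) - t - R / 2) / R = 2 * (t / R) + 1 := by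
      field_simp; ring
    have e2 : 4 * t / R = 4 * (t / R) := by ring
    rw [Int.card_Icc]
    rcases le_or_gt (hi i + 1 - lo i) 0 with h | h
    · rw [Int.toNat_of_nonpos h]; push_cast; positivity
    · have e3 : (((hi i + 1 - lo i).toNat : ℕ) : ℝ) = ((hi i : ℝ) + 1 - lo i) := by
        have := Int.toNat_of_nonneg h.le
        exact_mod_cast this
      rw [e3, e2]
      linarith
  have hcard : ((K.filter fun k => nrm (S k - z) ≤ t).card : ℝ) ≤
      (box.card : ℝ) * (ρ * R ^ d) := by
    calc ((K.filter fun k => nrm (S k - z) ≤ t).card : ℝ)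
        ≤ ((box.biUnion fun m => K.filter fun k => S k ∈ cube (r • m) R).card : ℝ) := by
          exact_mod_cast Finset.card_le_card hsub
      _ ≤ ∑ m ∈ box, ((K.filter fun k => S k ∈ cube (r • m) R).card : ℝ) := by
          exact_mod_cast Finset.card_biUnion_le
      _ ≤ ∑ _m ∈ box, ρ * R ^ d := Finset.sum_le_sum fun m _ => hdens m
      _ = (box.card : ℝ) * (ρ * R ^ d) := by rw [Finset.sum_const, nsmul_eq_mul]
  have hboxcard : (box.card : ℝ) ≤ (4 * t / R) ^ d := by
    have e : box.card = ∏ i, (Finset.Icc (lo i) (hi i)).card := Fintype.card_piFinset _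
    rw [e]
    push_cast
    calc (∏ i, ((Finset.Icc (lo i) (hi i)).card : ℝ))
        ≤ ∏ _i : Fin d, (4 * t / R) :=
          Finset.prod_le_prod (fun i _ => by positivity) (fun i _ => hIcc i)
      _ = (4 * t / R) ^ d := by rw [Finset.prod_const, Finset.card_univ, Fintype.card_fin]
  calc ((K.filter fun k => nrm (S k - z) ≤ t).card : ℝ)
      ≤ (box.card : ℝ) * (ρ * R ^ d) := hcard
    _ ≤ (4 * t / R) ^ d * (ρ * R ^ d) := by
        apply mul_le_mul_of_nonneg_right hboxcard (by positivity)
    _ = 4 ^ d * ρ * t ^ d := by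
        field_simp
        rw [← mul_pow, div_mul_cancel₀ _ hR0.ne', mul_pow]

lemma rpow_near_aux {d : ℕ} (hd : 3 ≤ d) {ρ T q : ℝ} (hρ : 0 < ρ) (hT : 0 < T)
    (h : ρ * T ^ d ≤ q) :
    ρ * T ^ 2 ≤ ρ ^ ((1 : ℝ) - 2 / d) * q ^ ((2 : ℝ) / d) := by
  have hd0 : (0:ℝ) < (d:ℝ) := by
    have : (3:ℝ) ≤ d := by exact_mod_cast hd
    linarith
  have hdne : (d:ℝ) ≠ 0 := ne_of_gt hd0
  have key : ρ * T ^ 2 = ρ ^ ((1 : ℝ) - 2 / d) * (ρ * T ^ d) ^ ((2 : ℝ) / d) := by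
    rw [Real.mul_rpow hρ.le (by positivity), ← Real.rpow_natCast T d,
      ← Real.rpow_mul hT.le]
    rw [show (d : ℝ) * ((2:ℝ)/d) = 2 by field_simp]
    rw [show (T : ℝ) ^ (2:ℝ) = T ^ 2 by rw [← Real.rpow_natCast T 2]; norm_num]
    rw [← mul_assoc, ← Real.rpow_add hρ]
    norm_num
  rw [key]
  apply mul_le_mul_of_nonneg_left _ (Real.rpow_nonneg hρ.le _)
  exact Real.rpow_le_rpow (by positivity) h (by positivity)


lemma rpow_far_aux {d : ℕ} (hd : 3 ≤ d) {ρ T q : ℝ} (hρ : 0 < ρ) (hT : 0 < T)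
    (hq : 0 < q) (h : q ≤ ρ * T ^ d) :
    q * (1 / T ^ (d - 2)) ≤ ρ ^ ((1 : ℝ) - 2 / d) * q ^ ((2 : ℝ) / d) := by
  have hd0 : (0:ℝ) < (d:ℝ) := by
    have : (3:ℝ) ≤ d := by exact_mod_cast hd
    linarith
  have hdne : (d:ℝ) ≠ 0 := ne_of_gt hd0
  have hcast : ((d - 2 : ℕ) : ℝ) = (d : ℝ) - 2 := by
    have : 2 ≤ d := by omega
    push_cast [this]; ring
  have hTpow : T ^ (d - 2) = T ^ ((d:ℝ) - 2) := by
    rw [← Real.rpow_natCast T (d - 2), hcast]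
  have hexp : (1 : ℝ) - 2 / d = ((d:ℝ) - 2) / d := by field_simp
  have hd3 : (3:ℝ) ≤ d := by exact_mod_cast hd
  have hexpnn : (0:ℝ) ≤ ((d:ℝ) - 2) / d := by
    apply div_nonneg <;> linarith
  -- q^{(d-2)/d} ≤ ρ^{(d-2)/d} * T^{d-2}
  have hmain : q ^ (((d:ℝ) - 2) / d) ≤ ρ ^ (((d:ℝ) - 2) / d) * T ^ ((d:ℝ) - 2) := by
    have h1 : q ^ (((d:ℝ) - 2) / d) ≤ (ρ * T ^ d) ^ (((d:ℝ) - 2) / d) :=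
      Real.rpow_le_rpow hq.le h hexpnn
    have h2 : (ρ * T ^ d) ^ (((d:ℝ) - 2) / d)
        = ρ ^ (((d:ℝ) - 2) / d) * T ^ ((d:ℝ) - 2) := by
      rw [Real.mul_rpow hρ.le (by positivity), ← Real.rpow_natCast T d,
        ← Real.rpow_mul hT.le]
      congr 1
      field_simp
    linarith [h2 ▸ h1]
  -- split q = q^{2/d} * q^{(d-2)/d}
  have hsplit : q = q ^ ((2:ℝ) / d) * q ^ (((d:ℝ) - 2) / d) := by
    rw [← Real.rpow_add hq]
    rw [show (2:ℝ)/d + ((d:ℝ) - 2)/d = 1 by field_simp; ring]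
    exact (Real.rpow_one q).symm
  have hTpow0 : (0:ℝ) < T ^ ((d:ℝ) - 2) := Real.rpow_pos_of_pos hT _
  rw [hexp, hTpow]
  rw [div_eq_mul_inv, one_mul] -- maybe not needed
  calc q * (T ^ ((d:ℝ) - 2))⁻¹
      = q ^ ((2:ℝ) / d) * (q ^ (((d:ℝ) - 2) / d) * (T ^ ((d:ℝ) - 2))⁻¹) := by
        rw [← mul_assoc, ← hsplit]
    _ ≤ q ^ ((2:ℝ) / d) * (ρ ^ (((d:ℝ) - 2) / d) * T ^ ((d:ℝ) - 2) * (T ^ ((d:ℝ) - 2))⁻¹) := by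
        apply mul_le_mul_of_nonneg_left _ (by positivity)
        exact mul_le_mul_of_nonneg_right hmain (by positivity)
    _ = ρ ^ (((d:ℝ) - 2) / d) * q ^ ((2:ℝ) / d) := by
        rw [mul_assoc, mul_inv_cancel₀ (ne_of_gt hTpow0), mul_one]; ring

open Classical in
lemma dyadic_sum {d : ℕ} (hd : 3 ≤ d) {ρ R q : ℝ} (hρ0 : 0 < ρ) (hR1 : 1 ≤ R)
    (hq1 : 1 ≤ q) (K : Finset ℕ) (f : ℕ → ℝ)
    (hqK : (K.card : ℝ) ≤ q)
    (hcount : ∀ t : ℝ, R ≤ t →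
      ((K.filter fun k => f k ≤ t).card : ℝ) ≤ 4 ^ d * ρ * t ^ d) :
    ∑ k ∈ K.filter (fun k => 2 * R ≤ f k), 1 / f k ^ (d - 2)
      ≤ (2 * 8 ^ d + 2) * ρ ^ ((1 : ℝ) - 2 / d) * q ^ ((2 : ℝ) / d) := by
  have hR0 : (0:ℝ) < R := by linarith
  have hq0 : (0:ℝ) < q := by linarith
  set T : ℕ → ℝ := fun j => 2 ^ j * (2 * R) with hT
  have hTpos : ∀ j, 0 < T j := fun j => by simp only [hT]; positivity
  have hTmono : ∀ i j, i ≤ j → T i ≤ T j := by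
    intro i j hij
    simp only [hT]
    have h1 : (2:ℝ) ^ i ≤ 2 ^ j := pow_le_pow_right₀ one_le_two hij
    nlinarith
  have hTsucc : ∀ j, T (j + 1) = 2 * T j := by intro j; simp only [hT]; ring
  have hT0 : T 0 = 2 * R := by simp [hT]
  -- horizon
  obtain ⟨M, hM⟩ : ∃ M : ℕ, ∀ k ∈ K, f k < T M := by
    refine ⟨K.sup fun k => ⌈f k⌉₊, ?_⟩
    intro k hk
    set B := K.sup fun k => ⌈f k⌉₊ with hB
    have h1 : f k ≤ (⌈f k⌉₊ : ℝ) := Nat.le_ceil _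
    have h2 : ((⌈f k⌉₊ : ℕ) : ℝ) ≤ (B : ℝ) := by
      exact_mod_cast Finset.le_sup (f := fun k => ⌈f k⌉₊) hk
    have h3 : (B : ℝ) < 2 ^ B := by exact_mod_cast Nat.lt_two_pow_self (n := B)
    have h4 : (2:ℝ) ^ B ≤ T B := by
      simp only [hT]
      nlinarith [pow_pos (zero_lt_two (α := ℝ)) B]
    linarith
  set ann : ℕ → Finset ℕ := fun j => K.filter fun k => T j ≤ f k ∧ f k < T (j + 1)
    with hann
  have hannpos : ∀ j, ∀ k ∈ ann j, 0 < f k := by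
    intro j k hk
    rw [hann, Finset.mem_filter] at hk
    exact lt_of_lt_of_le (hTpos j) hk.2.1
  have hcover : (K.filter fun k => 2 * R ≤ f k) ⊆ (Finset.range M).biUnion ann := by
    intro k hk
    rw [Finset.mem_filter] at hk
    obtain ⟨hkK, h2r⟩ := hk
    have hkM : f k < T M := hM k hkK
    have hex : ∃ j, f k < T (j + 1) :=
      ⟨M, lt_of_lt_of_le hkM (hTmono M (M + 1) (by omega))⟩
    set j := Nat.find hex with hj
    have hjspec : f k < T (j + 1) := Nat.find_spec hex
    have hjlow : T j ≤ f k := by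
      rcases Nat.eq_zero_or_pos j with h0 | hpos
      · rw [h0, hT0]; exact h2r
      · have hmin := Nat.find_min hex (m := j - 1) (by omega)
        push_neg at hmin
        have e : j - 1 + 1 = j := by omega
        rwa [e] at hmin
    have hjM : j < M := by
      by_contra hc
      push_neg at hc
      exact absurd (lt_of_le_of_lt (le_trans (hTmono M j hc) hjlow) hkM) (lt_irrefl _)
    exact Finset.mem_biUnion.mpr
      ⟨j, Finset.mem_range.mpr hjM, Finset.mem_filter.mpr ⟨hkK, hjlow, hjspec⟩⟩
  have hdisj : (↑(Finset.range M) : Set ℕ).PairwiseDisjoint ann := by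
    have key : ∀ {a b : ℕ}, a < b → Disjoint (ann a) (ann b) := by
      intro a b h
      rw [Finset.disjoint_left]
      intro k hka hkb
      rw [hann, Finset.mem_filter] at hka hkb
      have h1 : T (a + 1) ≤ T b := hTmono _ _ (by omega)
      linarith [hka.2.2, hkb.2.1]
    intro a _ b _ hab
    rcases lt_or_gt_of_ne hab with h | h
    · exact key h
    · exact (key h).symm
  have hsum1 : ∑ k ∈ K.filter (fun k => 2 * R ≤ f k), 1 / f k ^ (d - 2)
      ≤ ∑ j ∈ Finset.range M, ∑ k ∈ ann j, 1 / f k ^ (d - 2) := by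
    rw [← Finset.sum_biUnion hdisj]
    apply Finset.sum_le_sum_of_subset_of_nonneg hcover
    intro k hk _
    rw [Finset.mem_biUnion] at hk
    obtain ⟨j, _, hkj⟩ := hk
    have := hannpos j k hkj
    positivity
  have hann_bound : ∀ j, ∑ k ∈ ann j, 1 / f k ^ (d - 2)
      ≤ ((ann j).card : ℝ) * (1 / T j ^ (d - 2)) := by
    intro j
    have hterm : ∀ k ∈ ann j, 1 / f k ^ (d - 2) ≤ 1 / T j ^ (d - 2) := by
      intro k hk
      rw [hann, Finset.mem_filter] at hk
      have h2 : 0 < T j := hTpos j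
      exact one_div_le_one_div_of_le (by positivity)
        (pow_le_pow_left₀ h2.le hk.2.1 _)
    calc ∑ k ∈ ann j, 1 / f k ^ (d - 2)
        ≤ (ann j).card • (1 / T j ^ (d - 2)) := Finset.sum_le_card_nsmul _ _ _ hterm
      _ = ((ann j).card : ℝ) * (1 / T j ^ (d - 2)) := nsmul_eq_mul _ _
  have hcount1 : ∀ j, ((ann j).card : ℝ) ≤ 4 ^ d * ρ * (T (j + 1)) ^ d := by
    intro j
    have hsub : ann j ⊆ K.filter fun k => f k ≤ T (j + 1) := by
      intro k hk
      rw [hann, Finset.mem_filter] at hk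
      rw [Finset.mem_filter]
      exact ⟨hk.1, hk.2.2.le⟩
    have hrt : R ≤ T (j + 1) := by
      simp only [hT]
      have h2p : (1:ℝ) ≤ 2 ^ (j + 1) := one_le_pow₀ one_le_two
      nlinarith
    exact le_trans (by exact_mod_cast Finset.card_le_card hsub) (hcount _ hrt)
  have hcount2 : ∀ j, ((ann j).card : ℝ) ≤ q := fun j =>
    le_trans (by exact_mod_cast Finset.card_le_card (Finset.filter_subset _ _)) hqK
  -- threshold J
  have hexJ : ∃ j : ℕ, q ≤ ρ * (T j) ^ d := by
    refine ⟨⌈q / ρ⌉₊, ?_⟩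
    set j := ⌈q / ρ⌉₊ with hjdef
    have h1 : q / ρ ≤ (j : ℝ) := Nat.le_ceil _
    have h2 : (j : ℝ) < 2 ^ j := by exact_mod_cast Nat.lt_two_pow_self (n := j)
    have h3 : (2:ℝ) ^ j ≤ T j := by
      simp only [hT]
      nlinarith [pow_pos (zero_lt_two (α := ℝ)) j]
    have h4 : (1:ℝ) ≤ T j := by
      have := hTpos j
      simp only [hT]
      have h2p : (1:ℝ) ≤ 2 ^ j := one_le_pow₀ one_le_two
      nlinarith
    have h5 : T j ≤ (T j) ^ d := le_self_pow₀ h4 (by omega)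
    have h6 : q ≤ ρ * 2 ^ j := by
      rw [div_le_iff₀ hρ0] at h1
      nlinarith
    nlinarith
  set J := Nat.find hexJ with hJdef
  have hJspec : q ≤ ρ * (T J) ^ d := Nat.find_spec hexJ
  set X : ℝ := ρ ^ ((1 : ℝ) - 2 / d) * q ^ ((2 : ℝ) / d) with hX
  have hX0 : 0 ≤ X := by
    rw [hX]
    exact mul_nonneg (Real.rpow_nonneg hρ0.le _) (Real.rpow_nonneg hq0.le _)
  -- near part
  have hinner_near : ∀ j, ∑ k ∈ ann j, 1 / f k ^ (d - 2) ≤ 8 ^ d * ρ * (T j) ^ 2 := by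
    intro j
    have h2 : 0 < T j := hTpos j
    calc ∑ k ∈ ann j, 1 / f k ^ (d - 2)
        ≤ ((ann j).card : ℝ) * (1 / T j ^ (d - 2)) := hann_bound j
      _ ≤ (4 ^ d * ρ * (T (j + 1)) ^ d) * (1 / T j ^ (d - 2)) :=
          mul_le_mul_of_nonneg_right (hcount1 j) (by positivity)
      _ = 8 ^ d * ρ * (T j) ^ 2 := by
          have hTd : (T j) ^ d = (T j) ^ (d - 2) * (T j) ^ 2 := by
            rw [← pow_add]; congr 1; omega
          rw [hTsucc j, mul_pow, hTd,
            show (8:ℝ) ^ d = 4 ^ d * 2 ^ d by rw [← mul_pow]; norm_num]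
          field_simp
  have hTsq : ∀ j, (T j) ^ 2 = 4 ^ j * (2 * R) ^ 2 := by
    intro j
    simp only [hT]
    rw [mul_pow, show ((2:ℝ) ^ j) ^ 2 = 4 ^ j by
      rw [← pow_mul, show (4:ℝ) = 2 ^ 2 by norm_num, ← pow_mul, mul_comm]]
  have hnear : ∑ j ∈ (Finset.range M).filter (fun j => j < J),
      (∑ k ∈ ann j, 1 / f k ^ (d - 2)) ≤ 2 * 8 ^ d * X := by
    have step1 : ∑ j ∈ (Finset.range M).filter (fun j => j < J),
        (∑ k ∈ ann j, 1 / f k ^ (d - 2))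
        ≤ ∑ j ∈ Finset.range J, 8 ^ d * ρ * (T j) ^ 2 := by
      calc ∑ j ∈ (Finset.range M).filter (fun j => j < J),
          (∑ k ∈ ann j, 1 / f k ^ (d - 2))
          ≤ ∑ j ∈ (Finset.range M).filter (fun j => j < J), 8 ^ d * ρ * (T j) ^ 2 :=
            Finset.sum_le_sum fun j _ => hinner_near j
        _ ≤ ∑ j ∈ Finset.range J, 8 ^ d * ρ * (T j) ^ 2 := by
            apply Finset.sum_le_sum_of_subset_of_nonneg
            · intro j hj
              rw [Finset.mem_filter] at hj
              exact Finset.mem_range.mpr hj.2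
            · intro j _ _
              have := hTpos j
              positivity
    have step2 : ∑ j ∈ Finset.range J, 8 ^ d * ρ * (T j) ^ 2
        = 8 ^ d * ρ * (2 * R) ^ 2 * (((4:ℝ) ^ J - 1) / 3) := by
      calc ∑ j ∈ Finset.range J, 8 ^ d * ρ * (T j) ^ 2
          = ∑ j ∈ Finset.range J, 8 ^ d * ρ * (2 * R) ^ 2 * 4 ^ j := by
            apply Finset.sum_congr rfl
            intro j _
            rw [hTsq j]; ring
        _ = 8 ^ d * ρ * (2 * R) ^ 2 * ∑ j ∈ Finset.range J, (4:ℝ) ^ j := by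
            rw [Finset.mul_sum]
        _ = 8 ^ d * ρ * (2 * R) ^ 2 * (((4:ℝ) ^ J - 1) / 3) := by
            rw [geom_sum_eq (by norm_num : (4:ℝ) ≠ 1)]
            norm_num
    rcases Nat.eq_zero_or_pos J with hJ0 | hJpos
    · rw [hJ0] at step2
      simp only [Finset.range_zero, Finset.sum_empty] at step2
      -- step2 degenerate; just bound by 0
      have : ∑ j ∈ (Finset.range M).filter (fun j => j < J),
          (∑ k ∈ ann j, 1 / f k ^ (d - 2)) ≤ 0 := by
        rw [hJ0]
        simp
      nlinarith [hX0, pow_pos (show (0:ℝ) < 8 by norm_num) d]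
    · obtain ⟨J', hJ'⟩ : ∃ J', J = J' + 1 := ⟨J - 1, by omega⟩
      have hmin : ρ * (T J') ^ d ≤ q := by
        have := Nat.find_min hexJ (m := J') (by omega)
        push_neg at this
        exact this.le
      have hrp : ρ * (T J') ^ 2 ≤ X := rpow_near_aux hd hρ0 (hTpos J') hmin
      have hgsum : ((4:ℝ) ^ J - 1) / 3 ≤ 2 * 4 ^ J' := by
        rw [hJ']
        have h4 : (0:ℝ) ≤ 4 ^ J' := by positivity
        rw [pow_succ]
        linarith
      have hTJ' : (2 * R) ^ 2 * 4 ^ J' = (T J') ^ 2 := by rw [hTsq J']; ring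
      calc ∑ j ∈ (Finset.range M).filter (fun j => j < J),
          (∑ k ∈ ann j, 1 / f k ^ (d - 2))
          ≤ 8 ^ d * ρ * (2 * R) ^ 2 * (((4:ℝ) ^ J - 1) / 3) := by rw [← step2]; exact step1
        _ ≤ 8 ^ d * ρ * (2 * R) ^ 2 * (2 * 4 ^ J') := by
            apply mul_le_mul_of_nonneg_left hgsum
            positivity
        _ = 2 * 8 ^ d * (ρ * (T J') ^ 2) := by rw [← hTJ']; ring
        _ ≤ 2 * 8 ^ d * X := by
            apply mul_le_mul_of_nonneg_left hrp
            positivity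
  -- far part
  have hTadd : ∀ i, T (J + i) = 2 ^ i * T J := by
    intro i
    simp only [hT]
    rw [pow_add]
    ring
  have hfar : ∑ j ∈ (Finset.range M).filter (fun j => ¬ j < J),
      (∑ k ∈ ann j, 1 / f k ^ (d - 2)) ≤ 2 * X := by
    have hterm : ∀ j, ∑ k ∈ ann j, 1 / f k ^ (d - 2) ≤ q * (1 / T j ^ (d - 2)) := by
      intro j
      have h2 : 0 < T j := hTpos j
      calc ∑ k ∈ ann j, 1 / f k ^ (d - 2)
          ≤ ((ann j).card : ℝ) * (1 / T j ^ (d - 2)) := hann_bound j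
        _ ≤ q * (1 / T j ^ (d - 2)) :=
            mul_le_mul_of_nonneg_right (hcount2 j) (by positivity)
    have step1 : ∑ j ∈ (Finset.range M).filter (fun j => ¬ j < J),
        (∑ k ∈ ann j, 1 / f k ^ (d - 2))
        ≤ ∑ j ∈ Finset.Ico J (J + M), q * (1 / T j ^ (d - 2)) := by
      calc ∑ j ∈ (Finset.range M).filter (fun j => ¬ j < J),
          (∑ k ∈ ann j, 1 / f k ^ (d - 2))
          ≤ ∑ j ∈ (Finset.range M).filter (fun j => ¬ j < J), q * (1 / T j ^ (d - 2)) :=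
            Finset.sum_le_sum fun j _ => hterm j
        _ ≤ ∑ j ∈ Finset.Ico J (J + M), q * (1 / T j ^ (d - 2)) := by
            apply Finset.sum_le_sum_of_subset_of_nonneg
            · intro j hj
              rw [Finset.mem_filter, Finset.mem_range] at hj
              rw [Finset.mem_Ico]
              omega
            · intro j _ _
              have := hTpos j
              positivity
    have step2 : ∑ j ∈ Finset.Ico J (J + M), q * (1 / T j ^ (d - 2))
        = ∑ i ∈ Finset.range M, q * (1 / T (J + i) ^ (d - 2)) := by
      rw [Finset.sum_Ico_eq_sum_range]
      rw [Nat.add_sub_cancel_left]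
    have step3 : ∀ i, q * (1 / T (J + i) ^ (d - 2))
        ≤ q * (1 / T J ^ (d - 2)) * (1 / 2) ^ i := by
      intro i
      have hTJ : 0 < T J := hTpos J
      have hp1 : (2:ℝ) ^ i ≤ ((2:ℝ) ^ i) ^ (d - 2) := by
        have h1 : (1:ℝ) ≤ 2 ^ i := one_le_pow₀ one_le_two
        exact le_self_pow₀ h1 (by omega)
      have hp2 : (2:ℝ) ^ i * T J ^ (d - 2) ≤ ((2:ℝ) ^ i) ^ (d - 2) * T J ^ (d - 2) :=
        mul_le_mul_of_nonneg_right hp1 (by positivity)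
      have hdiv : 1 / T (J + i) ^ (d - 2) ≤ 1 / ((2:ℝ) ^ i * T J ^ (d - 2)) := by
        rw [hTadd i, mul_pow]
        exact one_div_le_one_div_of_le (by positivity) hp2
      have heq : 1 / ((2:ℝ) ^ i * T J ^ (d - 2))
          = (1 / T J ^ (d - 2)) * (1 / 2) ^ i := by
        rw [div_pow, one_pow, div_mul_div_comm, one_mul, mul_comm ((2:ℝ) ^ i) _]
      calc q * (1 / T (J + i) ^ (d - 2))
          ≤ q * (1 / ((2:ℝ) ^ i * T J ^ (d - 2))) :=
            mul_le_mul_of_nonneg_left hdiv hq0.le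
        _ = q * (1 / T J ^ (d - 2)) * (1 / 2) ^ i := by rw [heq]; ring
    have hgeom : ∑ i ∈ Finset.range M, ((1:ℝ) / 2) ^ i ≤ 2 := by
      rw [geom_sum_eq (by norm_num : (1/2:ℝ) ≠ 1)]
      rw [div_le_iff_of_neg (by norm_num : (1/2:ℝ) - 1 < 0)]
      have : (0:ℝ) ≤ (1/2:ℝ) ^ M := by positivity
      linarith
    have hTJ : 0 < T J := hTpos J
    have hrp : q * (1 / T J ^ (d - 2)) ≤ X := rpow_far_aux hd hρ0 hTJ hq0 hJspec
    calc ∑ j ∈ (Finset.range M).filter (fun j => ¬ j < J),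
        (∑ k ∈ ann j, 1 / f k ^ (d - 2))
        ≤ ∑ j ∈ Finset.Ico J (J + M), q * (1 / T j ^ (d - 2)) := step1
      _ = ∑ i ∈ Finset.range M, q * (1 / T (J + i) ^ (d - 2)) := step2
      _ ≤ ∑ i ∈ Finset.range M, q * (1 / T J ^ (d - 2)) * (1 / 2) ^ i :=
          Finset.sum_le_sum fun i _ => step3 i
      _ = q * (1 / T J ^ (d - 2)) * ∑ i ∈ Finset.range M, ((1:ℝ) / 2) ^ i := by
          rw [Finset.mul_sum]
      _ ≤ q * (1 / T J ^ (d - 2)) * 2 := by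
          apply mul_le_mul_of_nonneg_left hgeom
          positivity
      _ ≤ 2 * X := by nlinarith
  calc ∑ k ∈ K.filter (fun k => 2 * R ≤ f k), 1 / f k ^ (d - 2)
      ≤ ∑ j ∈ Finset.range M, ∑ k ∈ ann j, 1 / f k ^ (d - 2) := hsum1
    _ = ∑ j ∈ (Finset.range M).filter (fun j => j < J),
          (∑ k ∈ ann j, 1 / f k ^ (d - 2))
        + ∑ j ∈ (Finset.range M).filter (fun j => ¬ j < J),
          (∑ k ∈ ann j, 1 / f k ^ (d - 2)) :=
        (Finset.sum_filter_add_sum_filter_not _ _ _).symm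
    _ ≤ 2 * 8 ^ d * X + 2 * X := add_le_add hnear hfar
    _ = (2 * 8 ^ d + 2) * ρ ^ ((1 : ℝ) - 2 / d) * q ^ ((2 : ℝ) / d) := by
        rw [hX]; ring

end AuxLemmas

open Classical in
/-- Rearrangement bound: under the same density hypothesis,
`Σ_{k∈K, ‖S(k)-z‖ ≥ 2r} ‖S(k)-z‖^{-(d-2)} ≤ C₃ ρ^{1-2/d} |K|^{2/d}`. -/
theorem local_density_global_sum {d : ℕ} (hd : 3 ≤ d) :
    ∃ C₃ : ℝ, 0 < C₃ ∧ ∀ (ρ : ℝ), 0 < ρ → ρ < 1 → ∀ r : ℕ, 1 ≤ r →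
      ∀ (S : ℕ → V d) (K : Finset ℕ),
      (∀ m : V d, ((K.filter fun k => S k ∈ cube (r • m) (r : ℝ)).card : ℝ)
          ≤ ρ * (r : ℝ) ^ d) →
      ∀ z : V d,
      ∑ k ∈ K.filter fun k => 2 * (r : ℝ) ≤ nrm (S k - z),
          1 / nrm (S k - z) ^ (d - 2)
        ≤ C₃ * ρ ^ ((1 : ℝ) - 2 / d) * (K.card : ℝ) ^ ((2 : ℝ) / d) := by
  refine ⟨2 * 8 ^ d + 2, by positivity, ?_⟩
  intro ρ hρ0 hρ1 r hr S K hdens z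
  have hd0 : (0:ℝ) < d := by
    have h3 : (3:ℝ) ≤ d := by exact_mod_cast hd
    linarith
  have hR1 : (1:ℝ) ≤ (r:ℝ) := by exact_mod_cast hr
  rcases Nat.eq_zero_or_pos K.card with hK0 | hKpos
  · have hKempty : K = ∅ := Finset.card_eq_zero.mp hK0
    rw [hKempty]
    simp [Real.zero_rpow (div_ne_zero two_ne_zero (ne_of_gt hd0))]
  · have hq1 : (1:ℝ) ≤ (K.card : ℝ) := by exact_mod_cast hKpos
    have hcount : ∀ t : ℝ, (r:ℝ) ≤ t →
        ((K.filter fun k => nrm (S k - z) ≤ t).card : ℝ) ≤ 4 ^ d * ρ * t ^ d :=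
      fun t ht => count_ball (by omega) hρ0 hr S K hdens z ht
    exact dyadic_sum hd hρ0 hR1 hq1 K (fun k => nrm (S k - z)) le_rfl hcount


end SRW
end
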